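/- For every bounded linear operator A on a complex Hilbert space, r(A) ≤ ((1/4)·‖|A²|² + |(A*)²|²‖ + (1/2)·w(A⁴))^{1/4}, where r is the spectral radius and w the numerical radius. -/

import Mathlib

open scoped InnerProductSpace

variable {H : Type*} [NormedAddCommGroup H] [InnerProductSpace ℂ H] [CompleteSpace H]

/-- The numerical radius of a bounded linear operator. -/
noncomputable def numRad (A : H →L[ℂ] H) : ℝ :=
  sSup {r : ℝ | ∃ x : H, ‖x‖ = 1 ∧ r = ‖⟪A x, x⟫_ℂ‖}

/-- The absolute value `|A| = (A*A)^(1/2)` of a bounded linear operator. -/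
noncomputable def oabs (A : H →L[ℂ] H) : H →L[ℂ] H :=
  CFC.sqrt (ContinuousLinearMap.adjoint A * A)

/-- The spectral radius (as a real number). -/
noncomputable def specRad (A : H →L[ℂ] H) : ℝ := (spectralRadius ℂ A).toReal


open ContinuousLinearMap

lemma numRad_bdd (A : H →L[ℂ] H) :
    BddAbove {r : ℝ | ∃ x : H, ‖x‖ = 1 ∧ r = ‖⟪A x, x⟫_ℂ‖} := by
  refine ⟨‖A‖, fun r hr => ?_⟩
  obtain ⟨x, hx, rfl⟩ := hr
  calc ‖⟪A x, x⟫_ℂ‖ ≤ ‖A x‖ * ‖x‖ := norm_inner_le_norm _ _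
    _ ≤ ‖A‖ * ‖x‖ * ‖x‖ := by gcongr; exact A.le_opNorm x
    _ = ‖A‖ := by rw [hx]; ring

lemma numRad_nonneg (A : H →L[ℂ] H) : 0 ≤ numRad A :=
  Real.sSup_nonneg fun r => by rintro ⟨x, hx, rfl⟩; exact norm_nonneg _

lemma inner_le_numRad (A : H →L[ℂ] H) {x : H} (hx : ‖x‖ = 1) :
    ‖⟪A x, x⟫_ℂ‖ ≤ numRad A :=
  le_csSup (numRad_bdd A) ⟨x, hx, rfl⟩

lemma inner_le_numRad_mul (A : H →L[ℂ] H) (x : H) :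
    ‖⟪A x, x⟫_ℂ‖ ≤ numRad A * ‖x‖ ^ 2 := by
  rcases eq_or_ne x 0 with rfl | hx
  · simp
  · have hxn : (0:ℝ) < ‖x‖ := norm_pos_iff.mpr hx
    set c : ℂ := (‖x‖ : ℂ)⁻¹ with hc
    have h1 : ‖c • x‖ = 1 := by
      rw [norm_smul, hc, norm_inv, Complex.norm_real, Real.norm_of_nonneg hxn.le,
        inv_mul_cancel₀ hxn.ne']
    have h2 := inner_le_numRad A h1
    have h3 : ⟪A (c • x), c • x⟫_ℂ = c * (starRingEnd ℂ) c * ⟪A x, x⟫_ℂ := by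
      rw [map_smul, inner_smul_left, inner_smul_right]; ring
    rw [h3] at h2
    have h4 : ‖c * (starRingEnd ℂ) c * ⟪A x, x⟫_ℂ‖ = (‖x‖^2)⁻¹ * ‖⟪A x, x⟫_ℂ‖ := by
      rw [norm_mul, norm_mul, RingHomIsometric.norm_map, hc, norm_inv, Complex.norm_real,
        Real.norm_of_nonneg hxn.le, sq]
      field_simp
    rw [h4] at h2
    calc ‖⟪A x, x⟫_ℂ‖ = ((‖x‖ ^ 2)⁻¹ * ‖⟪A x, x⟫_ℂ‖) * ‖x‖ ^ 2 := by field_simp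
      _ ≤ numRad A * ‖x‖ ^ 2 := mul_le_mul_of_nonneg_right h2 (by positivity)

lemma spec_le_numRad (A : H →L[ℂ] H) {z : ℂ} (hz : z ∈ spectrum ℂ A) :
    ‖z‖ ≤ numRad A := by
  by_contra h
  push_neg at h
  rw [spectrum.mem_iff] at hz
  apply hz
  have hc : (0 : ℝ) < ‖z‖ - numRad A := by linarith
  refine isUnit_of_forall_le_norm_inner_map _ (c := ⟨‖z‖ - numRad A, hc.le⟩)
    (by exact_mod_cast hc) fun x => ?_
  have h1 : ⟪(algebraMap ℂ (H →L[ℂ] H) z - A) x, x⟫_ℂ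
      = (starRingEnd ℂ) z * (‖x‖ : ℂ) ^ 2 - ⟪A x, x⟫_ℂ := by
    rw [ContinuousLinearMap.sub_apply, inner_sub_left, Algebra.algebraMap_eq_smul_one,
      ContinuousLinearMap.smul_apply, ContinuousLinearMap.one_apply, inner_smul_left,
      inner_self_eq_norm_sq_to_K]
    norm_cast
  rw [h1]
  have h2 : ‖(starRingEnd ℂ) z * (‖x‖ : ℂ) ^ 2‖ = ‖z‖ * ‖x‖ ^ 2 := by
    rw [norm_mul, RingHomIsometric.norm_map, norm_pow, Complex.norm_real,
      Real.norm_of_nonneg (norm_nonneg x)]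
  have h3 := inner_le_numRad_mul A x
  calc ‖x‖ ^ 2 * (⟨‖z‖ - numRad A, hc.le⟩ : NNReal)
      = ‖z‖ * ‖x‖ ^ 2 - numRad A * ‖x‖ ^ 2 := by push_cast; ring
    _ ≤ ‖(starRingEnd ℂ) z * (‖x‖ : ℂ) ^ 2‖ - ‖⟪A x, x⟫_ℂ‖ := by rw [h2]; linarith
    _ ≤ ‖(starRingEnd ℂ) z * (‖x‖ : ℂ) ^ 2 - ⟪A x, x⟫_ℂ‖ := norm_sub_norm_le _ _

open ContinuousLinearMap in
lemma kittaneh_pointwise (T : H →L[ℂ] H) {x : H} (hx : ‖x‖ = 1) :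
    ‖⟪T x, x⟫_ℂ‖ ^ 2 ≤
      1 / 4 * ‖adjoint T * T + T * adjoint T‖ + 1 / 2 * numRad (T ^ 2) := by
  rcases eq_or_ne (⟪T x, x⟫_ℂ) 0 with h0 | h0
  · rw [h0]
    simp only [norm_zero, ne_eq, OfNat.ofNat_ne_zero, not_false_eq_true, zero_pow]
    have := numRad_nonneg (T ^ 2)
    positivity
  · set d : ℂ := ⟪T x, x⟫_ℂ with hd
    set u : ℂ := (‖d‖ : ℂ) / d with hu
    have hud : u * d = (‖d‖ : ℂ) := by rw [hu]; field_simp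
    have hun : ‖u‖ = 1 := by
      rw [hu, norm_div, Complex.norm_real, Real.norm_of_nonneg (norm_nonneg d)]
      exact div_self (norm_ne_zero_iff.mpr h0)
    have hyx : ⟪(starRingEnd ℂ) u • T x + u • adjoint T x, x⟫_ℂ = 2 * (‖d‖ : ℂ) := by
      rw [inner_add_left, inner_smul_left, inner_smul_left, Complex.conj_conj,
        adjoint_inner_left]
      have h9 : ⟪x, T x⟫_ℂ = (starRingEnd ℂ) d := by rw [hd]; exact (inner_conj_symm (𝕜 := ℂ) x (T x)).symm
      simp only [h9, ← hd]
      rw [← map_mul, hud, Complex.conj_ofReal]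
      ring
    have h2d : 2 * ‖d‖ ≤ ‖(starRingEnd ℂ) u • T x + u • adjoint T x‖ := by
      have h := norm_inner_le_norm (𝕜 := ℂ) ((starRingEnd ℂ) u • T x + u • adjoint T x) x
      rw [hyx, hx, mul_one, norm_mul, Complex.norm_real,
        Real.norm_of_nonneg (norm_nonneg d)] at h
      simpa using h
    have hvw : ⟪(starRingEnd ℂ) u • T x, u • adjoint T x⟫_ℂ
        = u ^ 2 * ⟪(T ^ 2) x, x⟫_ℂ := by
      rw [inner_smul_left, inner_smul_right, Complex.conj_conj, adjoint_inner_right,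
        pow_two T, ContinuousLinearMap.mul_apply]
      ring
    have hysq : ‖(starRingEnd ℂ) u • T x + u • adjoint T x‖ ^ 2
        = ‖T x‖ ^ 2 + ‖adjoint T x‖ ^ 2 + 2 * RCLike.re (u ^ 2 * ⟪(T ^ 2) x, x⟫_ℂ) := by
      rw [@norm_add_sq ℂ, hvw, norm_smul, norm_smul, hun, RingHomIsometric.norm_map, hun,
        one_mul, one_mul]
      ring
    have hcross : RCLike.re (u ^ 2 * ⟪(T ^ 2) x, x⟫_ℂ) ≤ numRad (T ^ 2) := by
      calc RCLike.re (u ^ 2 * ⟪(T ^ 2) x, x⟫_ℂ) ≤ ‖u ^ 2 * ⟪(T ^ 2) x, x⟫_ℂ‖ :=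
            RCLike.re_le_norm _
        _ = ‖⟪(T ^ 2) x, x⟫_ℂ‖ := by rw [norm_mul, norm_pow, hun]; ring
        _ ≤ numRad (T ^ 2) := inner_le_numRad _ hx
    have hnorms : ‖T x‖ ^ 2 + ‖adjoint T x‖ ^ 2
        ≤ ‖adjoint T * T + T * adjoint T‖ := by
      have hv2 : ⟪(adjoint T * T) x, x⟫_ℂ = ⟪T x, T x⟫_ℂ := by
        rw [ContinuousLinearMap.mul_apply, adjoint_inner_left]
      have hw2 : ⟪(T * adjoint T) x, x⟫_ℂ = ⟪adjoint T x, adjoint T x⟫_ℂ := by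
        rw [ContinuousLinearMap.mul_apply, ← adjoint_inner_right]
      calc ‖T x‖ ^ 2 + ‖adjoint T x‖ ^ 2
          = RCLike.re ⟪(adjoint T * T + T * adjoint T) x, x⟫_ℂ := by
            rw [ContinuousLinearMap.add_apply, inner_add_left, map_add, hv2, hw2,
              ← @norm_sq_eq_re_inner ℂ, ← @norm_sq_eq_re_inner ℂ]
        _ ≤ ‖⟪(adjoint T * T + T * adjoint T) x, x⟫_ℂ‖ := RCLike.re_le_norm _
        _ ≤ ‖(adjoint T * T + T * adjoint T) x‖ * ‖x‖ := norm_inner_le_norm _ _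
        _ ≤ ‖adjoint T * T + T * adjoint T‖ := by
            rw [hx, mul_one]
            calc ‖(adjoint T * T + T * adjoint T) x‖
                ≤ ‖adjoint T * T + T * adjoint T‖ * ‖x‖ := le_opNorm _ _
              _ = _ := by rw [hx, mul_one]
    have hd2 : 4 * ‖d‖ ^ 2 ≤ ‖(starRingEnd ℂ) u • T x + u • adjoint T x‖ ^ 2 := by
      nlinarith [norm_nonneg d, norm_nonneg ((starRingEnd ℂ) u • T x + u • adjoint T x)]
    nlinarith [hysq, hcross, hnorms]

open ContinuousLinearMap in
lemma numRad_sq_le (T : H →L[ℂ] H) :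
    numRad T ^ 2 ≤ 1 / 4 * ‖adjoint T * T + T * adjoint T‖ + 1 / 2 * numRad (T ^ 2) := by
  set K : ℝ := 1 / 4 * ‖adjoint T * T + T * adjoint T‖ + 1 / 2 * numRad (T ^ 2) with hK
  have hK0 : 0 ≤ K := by
    have := numRad_nonneg (T ^ 2)
    positivity
  have h1 : numRad T ≤ Real.sqrt K := by
    refine Real.sSup_le ?_ (Real.sqrt_nonneg K)
    rintro r ⟨x, hx, rfl⟩
    exact (Real.le_sqrt (norm_nonneg _) hK0).mpr (kittaneh_pointwise T hx)
  calc numRad T ^ 2 ≤ Real.sqrt K ^ 2 := pow_le_pow_left₀ (numRad_nonneg T) h1 2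
    _ = K := Real.sq_sqrt hK0

open ContinuousLinearMap in
lemma oabs_sq (B : H →L[ℂ] H) : oabs B ^ 2 = adjoint B * B := by
  have h : (0 : H →L[ℂ] H) ≤ adjoint B * B := by
    rw [← star_eq_adjoint]; exact star_mul_self_nonneg B
  exact CFC.sq_sqrt _ h

theorem stmt17 (A : H →L[ℂ] H) :
    specRad A ≤
      ((1 / 4) * ‖oabs (A ^ 2) ^ 2 + oabs (ContinuousLinearMap.adjoint A ^ 2) ^ 2‖
        + (1 / 2) * numRad (A ^ 4)) ^ ((1 : ℝ) / 4) := by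
  have hN : oabs (A ^ 2) ^ 2 + oabs (ContinuousLinearMap.adjoint A ^ 2) ^ 2
      = adjoint (A ^ 2) * A ^ 2 + A ^ 2 * adjoint (A ^ 2) := by
    rw [oabs_sq, oabs_sq]
    simp [← star_eq_adjoint, star_pow, star_star]
  set K : ℝ := (1 / 4) * ‖oabs (A ^ 2) ^ 2 + oabs (ContinuousLinearMap.adjoint A ^ 2) ^ 2‖
      + (1 / 2) * numRad (A ^ 4) with hK
  have hK0 : 0 ≤ K := by
    have := numRad_nonneg (A ^ 4)
    positivity
  have hkit : numRad (A ^ 2) ^ 2 ≤ K := by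
    have h := numRad_sq_le (A ^ 2)
    rw [hK, hN]
    have h4 : (A ^ 2) ^ 2 = A ^ 4 := by rw [← pow_mul]
    rw [h4] at h
    linarith
  have claim : ∀ z ∈ spectrum ℂ A, ‖z‖ ≤ K ^ ((1 : ℝ) / 4) := by
    intro z hz
    have hz2 : z ^ 2 ∈ spectrum ℂ (A ^ 2) :=
      spectrum.pow_image_subset A 2 ⟨z, hz, rfl⟩
    have h1 : ‖z ^ 2‖ ≤ numRad (A ^ 2) := spec_le_numRad _ hz2
    have h2 : ‖z‖ ^ 4 ≤ K := by
      have : ‖z ^ 2‖ ^ 2 ≤ numRad (A ^ 2) ^ 2 :=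
        pow_le_pow_left₀ (norm_nonneg _) h1 2
      calc ‖z‖ ^ 4 = ‖z ^ 2‖ ^ 2 := by rw [norm_pow, ← pow_mul]
        _ ≤ numRad (A ^ 2) ^ 2 := this
        _ ≤ K := hkit
    calc ‖z‖ = (‖z‖ ^ 4) ^ ((1 : ℝ) / 4) := by
          rw [← Real.rpow_natCast ‖z‖ 4, ← Real.rpow_mul (norm_nonneg z)]
          norm_num
      _ ≤ K ^ ((1 : ℝ) / 4) := Real.rpow_le_rpow (by positivity) h2 (by norm_num)
  have hsr : spectralRadius ℂ A ≤ ENNReal.ofReal (K ^ ((1 : ℝ) / 4)) := by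
    rw [spectralRadius]
    refine iSup₂_le fun z hz => ?_
    rw [← enorm_eq_nnnorm, ← ofReal_norm]
    exact ENNReal.ofReal_le_ofReal (claim z hz)
  exact ENNReal.toReal_le_of_le_ofReal (Real.rpow_nonneg hK0 _) hsr
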